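/- Let h: ℝ₊ → ℝ₊ be bounded measurable and t > 0, r ∈ (0,1). Then ∫_{-∞}^∞ | ∫₀^∞ h(τ) e^{-tτ}/(τ + iλ) dτ |² |λ|^{-r} dλ ≤ C t^{r-1} for a constant C depending only on ‖h‖_∞ and r. -/

import Mathlib

open MeasureTheory Real Set Filter
open scoped ENNReal

lemma lint_abs' (f : ℝ → ℝ≥0∞) (hf : Measurable f) :
    ∫⁻ x : ℝ, f |x| = 2 * ∫⁻ x in Set.Ioi (0:ℝ), f x := by
  have h2 : ∫⁻ x in Set.Ioi (0:ℝ), f |x| = ∫⁻ x in Set.Ioi (0:ℝ), f x :=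
    setLIntegral_congr_fun measurableSet_Ioi
      (fun x (hx : x ∈ Set.Ioi (0:ℝ)) => show f |x| = f x by rw [abs_of_pos hx])
  have h0 : ∫⁻ x in Set.Iic (0:ℝ), f |x| = ∫⁻ x in Set.Ici (0:ℝ), f |x| := by
    conv_lhs => rw [← Measure.map_neg_eq_self (volume : Measure ℝ)]
    rw [setLIntegral_map (f := fun x : ℝ => f |x|) (g := fun x : ℝ => -x) measurableSet_Iic
      (hf.comp measurable_abs) measurable_neg]
    congr 1
    · ext x; simp
    · ext x; simp [abs_neg]
  have h1 : ∫⁻ x in Set.Ici (0:ℝ), f |x| = ∫⁻ x in Set.Ioi (0:ℝ), f x := by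
    rw [← setLIntegral_congr (Ioi_ae_eq_Ici (μ := (volume : Measure ℝ)) (a := 0)), h2]
  rw [← lintegral_add_compl (fun x => f |x|) (measurableSet_Iic (a := (0:ℝ))), h0, h1, compl_Iic,
    h2, two_mul]

lemma Kbound' {r τ : ℝ} (hr0 : 0 < r) (hr1 : r < 1) (hτ : 0 < τ) :
    ∫⁻ l : ℝ, ENNReal.ofReal (|l| ^ (-r) / (τ^2 + l^2))
      ≤ ENNReal.ofReal ((2*(1/(1-r) + 1/(1+r))) * τ ^ (-1-r)) := by
  set g : ℝ → ℝ := fun x => if x ≤ τ then x ^ (-r) / τ^2 else x ^ (-r-2) with hg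
  have hgm : Measurable fun x => ENNReal.ofReal (g x) := by
    apply Measurable.ennreal_ofReal
    exact Measurable.ite (measurableSet_le measurable_id measurable_const)
      (by fun_prop) (by fun_prop)
  have hpt : ∀ l : ℝ, ENNReal.ofReal (|l| ^ (-r) / (τ^2 + l^2)) ≤ ENNReal.ofReal (g |l|) := by
    intro l
    apply ENNReal.ofReal_le_ofReal
    by_cases hl : |l| ≤ τ
    · rw [hg]; simp only [if_pos hl]
      gcongr
      nlinarith [sq_nonneg l]
    · push_neg at hl
      have hl0 : 0 < |l| := lt_trans hτ hl
      rw [hg]; simp only [if_neg (not_le.mpr hl)]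
      have he : |l| ^ (-r-2) = |l| ^ (-r) / |l| ^ (2:ℕ) := by
        rw [← Real.rpow_natCast |l| 2, ← Real.rpow_sub hl0]
        norm_num
      rw [he]
      gcongr
      nlinarith [sq_abs l]
  have e1 : ∫⁻ x in Set.Ioc (0:ℝ) τ, ENNReal.ofReal (g x)
      = ENNReal.ofReal (τ ^ (-r+1) / (-r+1) / τ^2) := by
    have hint1 : IntegrableOn (fun x : ℝ => x ^ (-r) / τ^2) (Set.Ioc 0 τ) := by
      apply Integrable.div_const
      have := intervalIntegral.intervalIntegrable_rpow' (a := 0) (b := τ) (r := -r)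
        (by linarith)
      rwa [intervalIntegrable_iff, uIoc_of_le hτ.le] at this
    rw [setLIntegral_congr_fun measurableSet_Ioc (
      (fun x (hx : x ∈ Set.Ioc (0:ℝ) τ) =>
        show ENNReal.ofReal (g x) = ENNReal.ofReal (x ^ (-r) / τ^2) by
          rw [hg]; simp only [if_pos hx.2]))]
    rw [← ofReal_integral_eq_lintegral_ofReal hint1]
    · congr 1
      rw [integral_div]
      congr 1
      rw [← intervalIntegral.integral_of_le hτ.le,
        integral_rpow (Or.inl (by linarith : (-1:ℝ) < -r)),
        Real.zero_rpow (by linarith : (-r+1:ℝ) ≠ 0), sub_zero]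
    · filter_upwards [ae_restrict_mem measurableSet_Ioc] with x hx
      have hx0 : (0:ℝ) < x := hx.1
      positivity
  have e2 : ∫⁻ x in Set.Ioi τ, ENNReal.ofReal (g x)
      = ENNReal.ofReal (-τ ^ (-r-2+1) / (-r-2+1)) := by
    have hint2 : IntegrableOn (fun x : ℝ => x ^ (-r-2)) (Set.Ioi τ) :=
      integrableOn_Ioi_rpow_of_lt (by linarith) hτ
    rw [setLIntegral_congr_fun measurableSet_Ioi (
      (fun x (hx : x ∈ Set.Ioi τ) =>
        show ENNReal.ofReal (g x) = ENNReal.ofReal (x ^ (-r-2)) by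
          rw [hg]; simp only [if_neg (not_le.mpr (show τ < x from hx))]))]
    rw [← ofReal_integral_eq_lintegral_ofReal hint2]
    · rw [integral_Ioi_rpow_of_lt (by linarith) hτ]
    · filter_upwards [ae_restrict_mem measurableSet_Ioi] with x hx
      have hx0 : (0:ℝ) < x := lt_trans hτ hx
      positivity
  calc ∫⁻ l : ℝ, ENNReal.ofReal (|l| ^ (-r) / (τ^2 + l^2))
      ≤ ∫⁻ l : ℝ, ENNReal.ofReal (g |l|) := lintegral_mono hpt
    _ = 2 * ∫⁻ x in Set.Ioi (0:ℝ), ENNReal.ofReal (g x) := lint_abs' _ hgm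
    _ = 2 * (ENNReal.ofReal (τ ^ (-r+1) / (-r+1) / τ^2)
          + ENNReal.ofReal (-τ ^ (-r-2+1) / (-r-2+1))) := by
        rw [← Ioc_union_Ioi_eq_Ioi hτ.le,
          lintegral_union measurableSet_Ioi (Set.Ioc_disjoint_Ioi le_rfl), e1, e2]
    _ ≤ ENNReal.ofReal ((2*(1/(1-r) + 1/(1+r))) * τ ^ (-1-r)) := by
        have key : τ ^ (-r+1) / (τ:ℝ)^2 = τ ^ (-1-r) := by
          rw [← Real.rpow_natCast τ 2, ← Real.rpow_sub hτ]
          norm_num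
          congr 1
          ring
        have h1 : τ ^ (-r+1) / (-r+1) / τ^2 = τ ^ (-1-r) * (1/(1-r)) := by
          rw [div_right_comm, key]
          rw [div_eq_mul_one_div]
          congr 2
          ring
        have h2 : -τ ^ (-r-2+1) / (-r-2+1) = τ ^ (-1-r) * (1/(1+r)) := by
          rw [show (-r-2+1:ℝ) = -(1+r) by ring, neg_div_neg_eq, div_eq_mul_one_div]
          congr 2
          ring
        have hp : (0:ℝ) ≤ τ ^ (-r+1) / (-r+1) / τ^2 := by
          rw [h1]
          exact mul_nonneg (Real.rpow_pos_of_pos hτ _).le (one_div_nonneg.mpr (by linarith))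
        have hq : (0:ℝ) ≤ -τ ^ (-r-2+1) / (-r-2+1) := by
          rw [h2]
          exact mul_nonneg (Real.rpow_pos_of_pos hτ _).le (one_div_nonneg.mpr (by linarith))
        rw [← ENNReal.ofReal_add hp hq, ← ENNReal.ofReal_ofNat 2,
          ← ENNReal.ofReal_mul (by norm_num)]
        apply ENNReal.ofReal_le_ofReal
        rw [h1, h2]
        apply le_of_eq
        ring

lemma int_exp_rpow' {a t : ℝ} (ha : 0 < a) (ht : 0 < t) :
    IntegrableOn (fun x : ℝ => x ^ (a-1) * Real.exp (-(t*x))) (Set.Ioi 0) := by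
  have base := Real.GammaIntegral_convergent ha
  have hcomp := (integrableOn_Ioi_comp_mul_left_iff
      (fun x : ℝ => Real.exp (-x) * x ^ (a-1)) 0 ht).mpr (by simpa using base)
  have h2 : IntegrableOn (fun x : ℝ =>
      ((t : ℝ) ^ (a-1))⁻¹ * (Real.exp (-(t*x)) * (t*x) ^ (a-1))) (Set.Ioi 0) :=
    hcomp.const_mul _
  refine IntegrableOn.congr_fun h2 (fun x hx => ?_) measurableSet_Ioi
  have hx0 : (0:ℝ) < x := hx
  rw [Real.mul_rpow ht.le hx0.le]
  have htne : (t:ℝ) ^ (a-1) ≠ 0 := (Real.rpow_pos_of_pos ht _).ne'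
  field_simp

lemma Gval' {a t : ℝ} (ha : 0 < a) (ht : 0 < t) :
    ∫⁻ τ in Set.Ioi (0:ℝ), ENNReal.ofReal (τ ^ (a-1) * Real.exp (-(t*τ)))
      = ENNReal.ofReal ((1/t) ^ a * Real.Gamma a) := by
  rw [← ofReal_integral_eq_lintegral_ofReal (int_exp_rpow' ha ht)]
  · rw [Real.integral_rpow_mul_exp_neg_mul_Ioi ha ht]
  · filter_upwards [ae_restrict_mem measurableSet_Ioi] with x hx
    have hx0 : (0:ℝ) < x := hx
    positivity

/-- weighted L² bound for the Laplace-type Cauchy integral: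
∫ℝ |∫₀^∞ h(τ)e^{-tτ}/(τ+iλ) dτ|² |λ|^{-r} dλ ≤ C t^{r-1}. -/
theorem stmt_11 (M r : ℝ) (hM : 0 ≤ M) (hr : r ∈ Set.Ioo (0:ℝ) 1) :
    ∃ C > (0:ℝ), ∀ h : ℝ → ℝ, Measurable h → (∀ τ : ℝ, 0 < τ → 0 ≤ h τ ∧ h τ ≤ M) →
      ∀ t : ℝ, 0 < t →
        (∫ l : ℝ, (‖∫ τ in Set.Ioi (0:ℝ),
            ((h τ * Real.exp (-t * τ) : ℝ) : ℂ) / ((τ : ℂ) + Complex.I * l)‖) ^ 2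
            * |l| ^ (-r))
          ≤ C * t ^ (r - 1) := by
  obtain ⟨hr0, hr1⟩ := hr
  set a : ℝ := (1-r)/2 with ha_def
  have ha : 0 < a := by rw [ha_def]; linarith
  set cr : ℝ := 2*(1/(1-r) + 1/(1+r)) with hcr_def
  have hcr : 0 < cr := by
    rw [hcr_def]
    have h1 : (0:ℝ) < 1 - r := by linarith
    have h2 : (0:ℝ) < 1 + r := by linarith
    positivity
  have hGa : 0 < Real.Gamma a := Real.Gamma_pos_of_pos ha
  refine ⟨M^2 * cr * (Real.Gamma a)^2 + 1, ?_, ?_⟩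
  · have : 0 ≤ M^2 * cr * (Real.Gamma a)^2 :=
      mul_nonneg (mul_nonneg (sq_nonneg M) hcr.le) (sq_nonneg _)
    linarith
  intro h hmeas hbnd t ht
  have htpow : 0 < t ^ (r-1) := Real.rpow_pos_of_pos ht _
  set J : ℝ → ℂ := fun l => ∫ τ in Set.Ioi (0:ℝ),
      ((h τ * Real.exp (-t * τ) : ℝ) : ℂ) / ((τ : ℂ) + Complex.I * l) with hJ_def
  have hφnn : ∀ τ : ℝ, 0 < τ → 0 ≤ h τ * Real.exp (-t*τ) := fun τ hτ =>
    mul_nonneg (hbnd τ hτ).1 (Real.exp_pos _).le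
  have hJm : AEStronglyMeasurable J volume := by
    have hm : Measurable fun p : ℝ × ℝ =>
        ((h p.2 * Real.exp (-t * p.2) : ℝ) : ℂ) / ((p.2 : ℂ) + Complex.I * p.1) := by fun_prop
    exact (hm.stronglyMeasurable.integral_prod_right').aestronglyMeasurable
  have hFnn : ∀ l : ℝ, 0 ≤ ‖J l‖^2 * |l| ^ (-r) := fun l => by positivity
  have hFm : AEStronglyMeasurable (fun l : ℝ => ‖J l‖^2 * |l| ^ (-r)) volume := by
    apply AEMeasurable.aestronglyMeasurable
    exact ((hJm.norm.aemeasurable.pow_const 2).mul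
      ((by fun_prop : Measurable fun l : ℝ => |l| ^ (-r)).aemeasurable))
  rw [integral_eq_lintegral_of_nonneg_ae (Filter.Eventually.of_forall hFnn) hFm]
  apply ENNReal.toReal_le_of_le_ofReal
  · have h0 : 0 ≤ M^2 * cr * (Real.Gamma a)^2 :=
      mul_nonneg (mul_nonneg (sq_nonneg M) hcr.le) (sq_nonneg _)
    nlinarith [htpow.le]
  -- main lintegral bound
  set G : ℝ≥0∞ := ∫⁻ τ in Set.Ioi (0:ℝ), ENNReal.ofReal (τ ^ (a-1) * Real.exp (-(t*τ)))
    with hG_def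
  have hG : G = ENNReal.ofReal ((1/t)^a * Real.Gamma a) := Gval' ha ht
  have hGtop : G ≠ ⊤ := by rw [hG]; exact ENNReal.ofReal_ne_top
  set u : ℝ → ℝ≥0∞ := fun τ =>
    ENNReal.ofReal (Real.sqrt (h τ * Real.exp (-t*τ)) * τ ^ ((a-1)/2)) with hu_def
  set v : ℝ → ℝ → ℝ≥0∞ := fun l τ =>
    ENNReal.ofReal (Real.sqrt (h τ * Real.exp (-t*τ)) * τ ^ (-(a-1)/2)
      / Real.sqrt (τ^2 + l^2)) with hv_def
  set B : ℝ → ℝ≥0∞ := fun l => ∫⁻ τ in Set.Ioi (0:ℝ),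
    ENNReal.ofReal (τ ^ (-(a-1)) * Real.exp (-(t*τ)) / (τ^2 + l^2)) with hB_def
  have hum : AEMeasurable u (volume.restrict (Set.Ioi 0)) := by rw [hu_def]; fun_prop
  have hvm : ∀ l : ℝ, AEMeasurable (v l) (volume.restrict (Set.Ioi 0)) := by
    intro l; rw [hv_def]; fun_prop
  -- Step 1: pointwise splitting of the norm of the integral
  have step1 : ∀ l : ℝ, ENNReal.ofReal ‖J l‖ ≤ ∫⁻ τ in Set.Ioi (0:ℝ), u τ * v l τ := by
    intro l
    calc ENNReal.ofReal ‖J l‖ = ‖J l‖ₑ := ofReal_norm _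
      _ ≤ ∫⁻ τ in Set.Ioi (0:ℝ),
          ‖((h τ * Real.exp (-t * τ) : ℝ) : ℂ) / ((τ : ℂ) + Complex.I * l)‖ₑ :=
        enorm_integral_le_lintegral_enorm _
      _ = ∫⁻ τ in Set.Ioi (0:ℝ), u τ * v l τ := by
        apply setLIntegral_congr_fun measurableSet_Ioi
        intro τ hτ
        beta_reduce
        have hτ0 : (0:ℝ) < τ := hτ
        have hφ := hφnn τ hτ0
        have hsq : (0:ℝ) < τ^2 + l^2 := by positivity
        have habs : ‖(τ : ℂ) + Complex.I * l‖ = Real.sqrt (τ^2 + l^2) := by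
          rw [mul_comm Complex.I (l:ℂ)]
          exact_mod_cast Complex.norm_add_mul_I τ l
        rw [← ofReal_norm, norm_div, Complex.norm_real, Real.norm_eq_abs,
          habs, abs_of_nonneg (by rw [neg_mul] at hφ ⊢; exact hφ)]
        rw [hu_def, hv_def]
        simp only
        rw [← ENNReal.ofReal_mul (mul_nonneg (Real.sqrt_nonneg _) (Real.rpow_nonneg hτ0.le _))]
        congr 1
        have h2 : τ ^ ((a-1)/2) * τ ^ (-(a-1)/2) = 1 := by
          rw [← Real.rpow_add hτ0, show ((a-1)/2 + -(a-1)/2 : ℝ) = 0 by ring, Real.rpow_zero]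
        have h1 : Real.sqrt (h τ * Real.exp (-t*τ)) * Real.sqrt (h τ * Real.exp (-t*τ))
            = h τ * Real.exp (-t*τ) := Real.mul_self_sqrt hφ
        calc h τ * Real.exp (-t * τ) / Real.sqrt (τ^2 + l^2)
            = (Real.sqrt (h τ * Real.exp (-t*τ)) * Real.sqrt (h τ * Real.exp (-t*τ)))
              * (τ ^ ((a-1)/2) * τ ^ (-(a-1)/2)) / Real.sqrt (τ^2 + l^2) := by
              rw [h1, h2, mul_one]
          _ = Real.sqrt (h τ * Real.exp (-t*τ)) * τ ^ ((a-1)/2)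
              * (Real.sqrt (h τ * Real.exp (-t*τ)) * τ ^ (-(a-1)/2) / Real.sqrt (τ^2 + l^2)) := by
              ring
  -- Step 2: Cauchy-Schwarz
  have holder : ∀ l : ℝ, (∫⁻ τ in Set.Ioi (0:ℝ), u τ * v l τ)
      ≤ (∫⁻ τ in Set.Ioi (0:ℝ), (u τ) ^ (2:ℝ)) ^ (1/2:ℝ)
        * (∫⁻ τ in Set.Ioi (0:ℝ), (v l τ) ^ (2:ℝ)) ^ (1/2:ℝ) := by
    intro l
    have := ENNReal.lintegral_mul_le_Lp_mul_Lq (volume.restrict (Set.Ioi 0))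
      Real.HolderConjugate.two_two hum (hvm l)
    simpa using this
  -- Step 3: bound on the u-integral
  have hXle : (∫⁻ τ in Set.Ioi (0:ℝ), (u τ) ^ (2:ℝ)) ≤ ENNReal.ofReal M * G := by
    have hpt : ∀ᵐ τ ∂(volume.restrict (Set.Ioi (0:ℝ))), (u τ)^(2:ℝ)
        ≤ ENNReal.ofReal M * ENNReal.ofReal (τ ^ (a-1) * Real.exp (-(t*τ))) := by
      filter_upwards [ae_restrict_mem measurableSet_Ioi] with τ hτ
      have hτ0 : (0:ℝ) < τ := hτ
      have hφ := hφnn τ hτ0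
      rw [hu_def]
      simp only
      rw [ENNReal.ofReal_rpow_of_nonneg
        (mul_nonneg (Real.sqrt_nonneg _) (Real.rpow_nonneg hτ0.le _)) (by norm_num),
        ← ENNReal.ofReal_mul hM]
      apply ENNReal.ofReal_le_ofReal
      have esq : ∀ y : ℝ, y ^ (2:ℝ) = y * y := fun y => by
        rw [show (2:ℝ) = ((2:ℕ):ℝ) by norm_num, Real.rpow_natCast]; ring
      have h700 : τ ^ ((a-1)/2) * τ ^ ((a-1)/2) = τ ^ (a-1) := by
        rw [← Real.rpow_add hτ0, show ((a-1)/2 + (a-1)/2 : ℝ) = a-1 by ring]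
      have e : (Real.sqrt (h τ * Real.exp (-t*τ)) * τ ^ ((a-1)/2)) ^ (2:ℝ)
          = (h τ * Real.exp (-t*τ)) * τ ^ (a-1) := by
        rw [esq]
        calc (Real.sqrt (h τ * Real.exp (-t*τ)) * τ ^ ((a-1)/2))
              * (Real.sqrt (h τ * Real.exp (-t*τ)) * τ ^ ((a-1)/2))
            = (Real.sqrt (h τ * Real.exp (-t*τ)) * Real.sqrt (h τ * Real.exp (-t*τ)))
              * (τ ^ ((a-1)/2) * τ ^ ((a-1)/2)) := by ring
          _ = (h τ * Real.exp (-t*τ)) * τ ^ (a-1) := by rw [Real.mul_self_sqrt hφ, h700]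
      rw [e]
      calc h τ * Real.exp (-t*τ) * τ^(a-1) ≤ M * Real.exp (-t*τ) * τ^(a-1) :=
            mul_le_mul_of_nonneg_right
              (mul_le_mul_of_nonneg_right (hbnd τ hτ0).2 (Real.exp_pos _).le)
              (Real.rpow_nonneg hτ0.le _)
        _ = M * (τ^(a-1) * Real.exp (-(t*τ))) := by rw [neg_mul]; ring
    calc (∫⁻ τ in Set.Ioi (0:ℝ), (u τ)^(2:ℝ))
        ≤ ∫⁻ τ in Set.Ioi (0:ℝ),
            ENNReal.ofReal M * ENNReal.ofReal (τ ^ (a-1) * Real.exp (-(t*τ))) :=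
          lintegral_mono_ae hpt
      _ = ENNReal.ofReal M * G := by
          rw [lintegral_const_mul' _ _ ENNReal.ofReal_ne_top]
  -- Step 4: bound on the v-integral
  have hYle : ∀ l : ℝ, (∫⁻ τ in Set.Ioi (0:ℝ), (v l τ) ^ (2:ℝ)) ≤ ENNReal.ofReal M * B l := by
    intro l
    have hpt : ∀ᵐ τ ∂(volume.restrict (Set.Ioi (0:ℝ))), (v l τ)^(2:ℝ)
        ≤ ENNReal.ofReal M
          * ENNReal.ofReal (τ ^ (-(a-1)) * Real.exp (-(t*τ)) / (τ^2 + l^2)) := by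
      filter_upwards [ae_restrict_mem measurableSet_Ioi] with τ hτ
      have hτ0 : (0:ℝ) < τ := hτ
      have hφ := hφnn τ hτ0
      have hsq : (0:ℝ) < τ^2 + l^2 := by positivity
      rw [hv_def]
      simp only
      rw [ENNReal.ofReal_rpow_of_nonneg
        (div_nonneg (mul_nonneg (Real.sqrt_nonneg _) (Real.rpow_nonneg hτ0.le _))
          (Real.sqrt_nonneg _)) (by norm_num),
        ← ENNReal.ofReal_mul hM]
      apply ENNReal.ofReal_le_ofReal
      have esq : ∀ y : ℝ, y ^ (2:ℝ) = y * y := fun y => by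
        rw [show (2:ℝ) = ((2:ℕ):ℝ) by norm_num, Real.rpow_natCast]; ring
      have h700 : τ ^ (-(a-1)/2) * τ ^ (-(a-1)/2) = τ ^ (-(a-1)) := by
        rw [← Real.rpow_add hτ0, show (-(a-1)/2 + -(a-1)/2 : ℝ) = -(a-1) by ring]
      have e : (Real.sqrt (h τ * Real.exp (-t*τ)) * τ ^ (-(a-1)/2) / Real.sqrt (τ^2+l^2)) ^ (2:ℝ)
          = (h τ * Real.exp (-t*τ)) * τ ^ (-(a-1)) / (τ^2 + l^2) := by
        rw [esq]
        calc (Real.sqrt (h τ * Real.exp (-t*τ)) * τ ^ (-(a-1)/2) / Real.sqrt (τ^2+l^2))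
              * (Real.sqrt (h τ * Real.exp (-t*τ)) * τ ^ (-(a-1)/2) / Real.sqrt (τ^2+l^2))
            = (Real.sqrt (h τ * Real.exp (-t*τ)) * Real.sqrt (h τ * Real.exp (-t*τ)))
              * (τ ^ (-(a-1)/2) * τ ^ (-(a-1)/2))
              / (Real.sqrt (τ^2+l^2) * Real.sqrt (τ^2+l^2)) := by ring
          _ = (h τ * Real.exp (-t*τ)) * τ ^ (-(a-1)) / (τ^2 + l^2) := by
              rw [Real.mul_self_sqrt hφ, Real.mul_self_sqrt hsq.le, h700]
      rw [e]
      calc h τ * Real.exp (-t*τ) * τ^(-(a-1)) / (τ^2+l^2)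
          ≤ M * Real.exp (-t*τ) * τ^(-(a-1)) / (τ^2+l^2) := by
            gcongr
            exact (hbnd τ hτ0).2
        _ = M * (τ^(-(a-1)) * Real.exp (-(t*τ)) / (τ^2+l^2)) := by rw [neg_mul]; ring
    calc (∫⁻ τ in Set.Ioi (0:ℝ), (v l τ)^(2:ℝ))
        ≤ ∫⁻ τ in Set.Ioi (0:ℝ), ENNReal.ofReal M
            * ENNReal.ofReal (τ ^ (-(a-1)) * Real.exp (-(t*τ)) / (τ^2 + l^2)) :=
          lintegral_mono_ae hpt
      _ = ENNReal.ofReal M * B l := by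
          rw [lintegral_const_mul' _ _ ENNReal.ofReal_ne_top, hB_def]
  -- Step 5: pointwise bound for the outer integrand
  have key : ∀ l : ℝ, ENNReal.ofReal (‖J l‖^2 * |l| ^ (-r))
      ≤ ((ENNReal.ofReal M * G) * (ENNReal.ofReal M * B l)) * ENNReal.ofReal (|l| ^ (-r)) := by
    intro l
    rw [ENNReal.ofReal_mul (by positivity), ENNReal.ofReal_pow (norm_nonneg _)]
    have h1 := (step1 l).trans (holder l)
    have h2 : (ENNReal.ofReal ‖J l‖)^2
        ≤ (∫⁻ τ in Set.Ioi (0:ℝ), (u τ) ^ (2:ℝ)) * (∫⁻ τ in Set.Ioi (0:ℝ), (v l τ) ^ (2:ℝ)) := by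
      calc (ENNReal.ofReal ‖J l‖)^2
          ≤ ((∫⁻ τ in Set.Ioi (0:ℝ), (u τ) ^ (2:ℝ)) ^ (1/2:ℝ)
            * (∫⁻ τ in Set.Ioi (0:ℝ), (v l τ) ^ (2:ℝ)) ^ (1/2:ℝ))^2 := by gcongr
        _ = _ := by
            rw [mul_pow, ← ENNReal.rpow_natCast (_ ^ (1/2:ℝ)) 2,
              ← ENNReal.rpow_natCast (_ ^ (1/2:ℝ)) 2, ← ENNReal.rpow_mul, ← ENNReal.rpow_mul]
            norm_num
    exact mul_le_mul' (h2.trans (mul_le_mul' hXle (hYle l))) le_rfl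
  -- Step 6: the weighted integral of B
  have hD : ∫⁻ l : ℝ, B l * ENNReal.ofReal (|l| ^ (-r)) ≤ ENNReal.ofReal cr * G := by
    have swap : ∫⁻ l : ℝ, B l * ENNReal.ofReal (|l| ^ (-r))
        = ∫⁻ τ in Set.Ioi (0:ℝ), ∫⁻ l : ℝ,
            ENNReal.ofReal (τ ^ (-(a-1)) * Real.exp (-(t*τ)) / (τ^2 + l^2))
              * ENNReal.ofReal (|l| ^ (-r)) := by
      rw [hB_def]
      simp only
      rw [lintegral_congr (fun l => (lintegral_mul_const' _ _ ENNReal.ofReal_ne_top).symm)]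
      exact lintegral_lintegral_swap (by fun_prop)
    rw [swap]
    have inner : ∀ᵐ τ ∂(volume.restrict (Set.Ioi (0:ℝ))),
        (∫⁻ l : ℝ, ENNReal.ofReal (τ ^ (-(a-1)) * Real.exp (-(t*τ)) / (τ^2 + l^2))
          * ENNReal.ofReal (|l| ^ (-r)))
        ≤ ENNReal.ofReal cr * ENNReal.ofReal (τ^(a-1) * Real.exp (-(t*τ))) := by
      filter_upwards [ae_restrict_mem measurableSet_Ioi] with τ hτ
      have hτ0 : (0:ℝ) < τ := hτ
      have hA : 0 ≤ τ^(-(a-1)) * Real.exp (-(t*τ)) := by positivity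
      have e : ∀ l : ℝ, ENNReal.ofReal (τ ^ (-(a-1)) * Real.exp (-(t*τ)) / (τ^2 + l^2))
            * ENNReal.ofReal (|l| ^ (-r))
          = ENNReal.ofReal (τ ^ (-(a-1)) * Real.exp (-(t*τ)))
            * ENNReal.ofReal (|l| ^ (-r) / (τ^2+l^2)) := by
        intro l
        have hsq : (0:ℝ) < τ^2 + l^2 := by positivity
        rw [← ENNReal.ofReal_mul (div_nonneg hA hsq.le), ← ENNReal.ofReal_mul hA]
        congr 1
        rw [div_mul_eq_mul_div, mul_div_assoc]
      simp_rw [e]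
      rw [lintegral_const_mul' _ _ ENNReal.ofReal_ne_top]
      calc _ ≤ ENNReal.ofReal (τ ^ (-(a-1)) * Real.exp (-(t*τ)))
            * ENNReal.ofReal (cr * τ ^ (-1-r)) :=
            mul_le_mul' le_rfl (by rw [hcr_def]; exact Kbound' hr0 hr1 hτ0)
        _ = ENNReal.ofReal cr * ENNReal.ofReal (τ^(a-1) * Real.exp (-(t*τ))) := by
            rw [← ENNReal.ofReal_mul hA, ← ENNReal.ofReal_mul hcr.le]
            congr 1
            have hee : τ ^ (-(a-1)) * τ ^ (-1-r) = τ ^ (a-1) := by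
              rw [← Real.rpow_add hτ0]
              congr 1
              rw [ha_def]; ring
            calc τ^(-(a-1)) * Real.exp (-(t*τ)) * (cr * τ^(-1-r))
                = cr * ((τ^(-(a-1)) * τ^(-1-r)) * Real.exp (-(t*τ))) := by ring
              _ = cr * (τ^(a-1) * Real.exp (-(t*τ))) := by rw [hee]
    calc _ ≤ ∫⁻ τ in Set.Ioi (0:ℝ),
          ENNReal.ofReal cr * ENNReal.ofReal (τ^(a-1) * Real.exp (-(t*τ))) :=
        lintegral_mono_ae inner
      _ = ENNReal.ofReal cr * G := by
          rw [lintegral_const_mul' _ _ ENNReal.ofReal_ne_top]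
  -- Step 7: conclusion
  have hc1top : ENNReal.ofReal M * G * ENNReal.ofReal M ≠ ⊤ := by
    rw [hG]
    exact ENNReal.mul_ne_top (ENNReal.mul_ne_top ENNReal.ofReal_ne_top ENNReal.ofReal_ne_top)
      ENNReal.ofReal_ne_top
  have hpw : ((1/t:ℝ)^a)^2 = t^(r-1) := by
    rw [← Real.rpow_natCast ((1/t)^a) 2, ← Real.rpow_mul (by positivity : (0:ℝ) ≤ 1/t),
      one_div, ← Real.rpow_neg_one t, ← Real.rpow_mul ht.le]
    congr 1
    push_cast
    rw [ha_def]; ring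
  calc ∫⁻ l : ℝ, ENNReal.ofReal (‖J l‖^2 * |l| ^ (-r))
      ≤ ∫⁻ l : ℝ, ((ENNReal.ofReal M * G) * (ENNReal.ofReal M * B l))
          * ENNReal.ofReal (|l| ^ (-r)) := lintegral_mono key
    _ = (ENNReal.ofReal M * G * ENNReal.ofReal M)
        * ∫⁻ l : ℝ, B l * ENNReal.ofReal (|l| ^ (-r)) := by
        have e : ∀ l : ℝ, ((ENNReal.ofReal M * G) * (ENNReal.ofReal M * B l))
            * ENNReal.ofReal (|l| ^ (-r))
            = (ENNReal.ofReal M * G * ENNReal.ofReal M)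
              * (B l * ENNReal.ofReal (|l| ^ (-r))) := fun l => by ring
        simp_rw [e]
        rw [lintegral_const_mul' _ _ hc1top]
    _ ≤ (ENNReal.ofReal M * G * ENNReal.ofReal M) * (ENNReal.ofReal cr * G) :=
        mul_le_mul' le_rfl hD
    _ ≤ ENNReal.ofReal ((M^2 * cr * (Real.Gamma a)^2 + 1) * t^(r-1)) := by
        rw [hG, ← ENNReal.ofReal_mul hM, ← ENNReal.ofReal_mul (by positivity),
          ← ENNReal.ofReal_mul hcr.le, ← ENNReal.ofReal_mul (by positivity)]
        apply ENNReal.ofReal_le_ofReal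
        have hg0 : (0:ℝ) ≤ (1/t)^a * Real.Gamma a := by positivity
        have heq : M * ((1/t)^a * Real.Gamma a) * M * (cr * ((1/t)^a * Real.Gamma a))
            = M^2 * cr * (Real.Gamma a)^2 * (((1/t:ℝ)^a)^2) := by ring
        rw [heq, hpw]
        have h0 : 0 ≤ M^2 * cr * (Real.Gamma a)^2 :=
          mul_nonneg (mul_nonneg (sq_nonneg M) hcr.le) (sq_nonneg _)
        nlinarith [htpow.le]
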